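/- Let N ≥ 2, α ∈ (0,N), and let Ω ⊆ ℝ^N be a Lebesgue-measurable set of finite measure. Then the Riesz energy of Ω is finite and satisfies V_α(Ω) ≤ C₀ · |Ω|^{1+α/N}, where C₀ = ∫_B |z|^{α−N} dz and B is the open ball in ℝ^N centered at the origin with Lebesgue measure 1. -/

import Mathlib

open MeasureTheory Metric

section RieszHelpers

variable {N : ℕ}

private lemma riesz_meas (x : EuclideanSpace ℝ (Fin N)) (c : ℝ) :
    Measurable fun y : EuclideanSpace ℝ (Fin N) => ‖x - y‖ ^ c :=
  (measurable_const.sub measurable_id).norm.pow measurable_const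

private lemma riesz_levelSet {c : ℝ} (hc : c < 0) {t : ℝ} (ht : 0 < t)
    (x : EuclideanSpace ℝ (Fin N)) :
    {y : EuclideanSpace ℝ (Fin N) | t < ‖x - y‖ ^ c}
      = ball x (t ^ (1 / c)) \ {x} := by
  have hs : (0 : ℝ) < t ^ (1 / c) := Real.rpow_pos_of_pos ht _
  have key : t = (t ^ (1 / c)) ^ c := by
    rw [← Real.rpow_mul ht.le, one_div_mul_cancel hc.ne, Real.rpow_one]
  ext y
  have hd : dist y x = ‖x - y‖ := by rw [dist_eq_norm, norm_sub_rev]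
  simp only [Set.mem_setOf_eq, Set.mem_diff, mem_ball, Set.mem_singleton_iff, hd]
  constructor
  · intro h
    have hxy : x - y ≠ 0 := by
      intro h0
      rw [h0, norm_zero, Real.zero_rpow hc.ne] at h
      linarith
    have hpos : 0 < ‖x - y‖ := norm_pos_iff.mpr hxy
    refine ⟨?_, fun hyx => hxy (by rw [hyx, sub_self])⟩
    have : (t ^ (1 / c)) ^ c < ‖x - y‖ ^ c := by rw [← key]; exact h
    exact (Real.rpow_lt_rpow_iff_of_neg hs hpos hc).mp this
  · rintro ⟨hlt, hne⟩
    have hpos : 0 < ‖x - y‖ := norm_pos_iff.mpr (sub_ne_zero.mpr fun h => hne h.symm)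
    have : (t ^ (1 / c)) ^ c < ‖x - y‖ ^ c :=
      (Real.rpow_lt_rpow_iff_of_neg hs hpos hc).mpr hlt
    rw [← key] at this
    exact this

private lemma riesz_layercake (x : EuclideanSpace ℝ (Fin N)) (c : ℝ)
    {S : Set (EuclideanSpace ℝ (Fin N))} (hS : MeasurableSet S) :
    ∫⁻ y in S, ENNReal.ofReal (‖x - y‖ ^ c)
      = ∫⁻ t in Set.Ioi (0 : ℝ), volume ({y | t < ‖x - y‖ ^ c} ∩ S) := by
  rw [lintegral_eq_lintegral_meas_lt (volume.restrict S)
      (Filter.Eventually.of_forall fun y => Real.rpow_nonneg (norm_nonneg _) _)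
      (riesz_meas x c).aemeasurable]
  exact lintegral_congr fun t => Measure.restrict_apply' hS

private lemma riesz_level_measure_le (hN : 0 < N) {c : ℝ} (hc : c < 0) {t : ℝ} (ht : 0 < t)
    (x : EuclideanSpace ℝ (Fin N)) {Ω : Set (EuclideanSpace ℝ (Fin N))} {ρ : ℝ}
    (hΩρ : volume Ω ≤ volume (ball (0 : EuclideanSpace ℝ (Fin N)) ρ)) :
    volume ({y | t < ‖x - y‖ ^ c} ∩ Ω)
      ≤ volume ({y | t < ‖(0 : EuclideanSpace ℝ (Fin N)) - y‖ ^ c}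
          ∩ ball (0 : EuclideanSpace ℝ (Fin N)) ρ) := by
  haveI : NeZero N := ⟨hN.ne'⟩
  haveI : Nontrivial (EuclideanSpace ℝ (Fin N)) := inferInstance
  haveI : Nontrivial (EuclideanSpace ℝ (Fin N)) := inferInstance
  set s := t ^ (1 / c) with hsdef
  rw [riesz_levelSet hc ht x, riesz_levelSet hc ht 0]
  have h1 : volume ((ball x s \ {x}) ∩ Ω)
      ≤ min (volume (ball (0 : EuclideanSpace ℝ (Fin N)) s)) (volume Ω) := by
    refine le_min ?_ (measure_mono Set.inter_subset_right)
    calc volume ((ball x s \ {x}) ∩ Ω) ≤ volume (ball x s) :=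
          measure_mono (Set.inter_subset_left.trans Set.diff_subset)
      _ = volume (ball (0 : EuclideanSpace ℝ (Fin N)) s) :=
          Measure.addHaar_ball_center volume x s
  have h2 : ((ball (0 : EuclideanSpace ℝ (Fin N)) s \ {0}) ∩ ball 0 ρ)
      = ball (0 : EuclideanSpace ℝ (Fin N)) (min s ρ) \ {0} := by
    ext y
    simp only [Set.mem_inter_iff, Set.mem_diff, mem_ball, Set.mem_singleton_iff, lt_min_iff]
    tauto
  rw [h2, measure_diff_null (measure_singleton _)]
  rcases le_total s ρ with h | h
  · rw [min_eq_left h]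
    exact h1.trans (min_le_left _ _)
  · rw [min_eq_right h]
    exact (h1.trans (min_le_right _ _)).trans hΩρ

private lemma riesz_inner_bound (hN : 0 < N) {c : ℝ} (hc : c < 0)
    {Ω : Set (EuclideanSpace ℝ (Fin N))} (hΩ : MeasurableSet Ω) {ρ : ℝ}
    (hΩρ : volume Ω ≤ volume (ball (0 : EuclideanSpace ℝ (Fin N)) ρ))
    (x : EuclideanSpace ℝ (Fin N)) :
    ∫⁻ y in Ω, ENNReal.ofReal (‖x - y‖ ^ c)
      ≤ ∫⁻ z in ball (0 : EuclideanSpace ℝ (Fin N)) ρ, ENNReal.ofReal (‖z‖ ^ c) := by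
  calc ∫⁻ y in Ω, ENNReal.ofReal (‖x - y‖ ^ c)
      = ∫⁻ t in Set.Ioi (0 : ℝ), volume ({y | t < ‖x - y‖ ^ c} ∩ Ω) :=
        riesz_layercake x c hΩ
    _ ≤ ∫⁻ t in Set.Ioi (0 : ℝ),
          volume ({y | t < ‖(0 : EuclideanSpace ℝ (Fin N)) - y‖ ^ c} ∩ ball 0 ρ) := by
        refine lintegral_mono_ae ((ae_restrict_iff' measurableSet_Ioi).mpr
          (Filter.Eventually.of_forall fun t ht => ?_))
        exact riesz_level_measure_le hN hc ht x hΩρ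
    _ = ∫⁻ z in ball (0 : EuclideanSpace ℝ (Fin N)) ρ,
          ENNReal.ofReal (‖(0 : EuclideanSpace ℝ (Fin N)) - z‖ ^ c) :=
        (riesz_layercake 0 c measurableSet_ball).symm
    _ = ∫⁻ z in ball (0 : EuclideanSpace ℝ (Fin N)) ρ, ENNReal.ofReal (‖z‖ ^ c) := by
        simp_rw [zero_sub, norm_neg]

private lemma riesz_scale (_hN : 0 < N) {c : ℝ} {r cs : ℝ} (hcs : 0 < cs) :
    ∫⁻ z in ball (0 : EuclideanSpace ℝ (Fin N)) (r * cs), ENNReal.ofReal (‖z‖ ^ c)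
      = ENNReal.ofReal (cs ^ ((N : ℝ) + c))
          * ∫⁻ z in ball (0 : EuclideanSpace ℝ (Fin N)) r, ENNReal.ofReal (‖z‖ ^ c) := by
  haveI : NeZero N := ⟨_hN.ne'⟩
  haveI : Nontrivial (EuclideanSpace ℝ (Fin N)) := inferInstance
  have hmeas_g : Measurable fun z : EuclideanSpace ℝ (Fin N) => ENNReal.ofReal (‖z‖ ^ c) :=
    (measurable_id.norm.pow measurable_const).ennreal_ofReal
  set f : EuclideanSpace ℝ (Fin N) → ENNReal := (ball (0 : EuclideanSpace ℝ (Fin N)) (r * cs)).indicator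
    (fun z => ENNReal.ofReal (‖z‖ ^ c)) with hfdef
  have hfm : Measurable f := hmeas_g.indicator measurableSet_ball
  have hcsN : (0 : ℝ) < cs ^ N := pow_pos hcs N
  have h1 : ∫⁻ x, f (cs • x) = ENNReal.ofReal ((cs ^ N)⁻¹) * ∫⁻ x, f x := by
    rw [← lintegral_map hfm (measurable_const_smul cs),
      Measure.map_addHaar_smul volume hcs.ne', lintegral_smul_measure]
    congr 2
    rw [finrank_euclideanSpace_fin, abs_of_pos (inv_pos.mpr hcsN)]
  have h2 : ∀ x : EuclideanSpace ℝ (Fin N), f (cs • x)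
      = ENNReal.ofReal (cs ^ c)
          * (ball (0 : EuclideanSpace ℝ (Fin N)) r).indicator (fun z => ENNReal.ofReal (‖z‖ ^ c)) x := by
    intro x
    have hmem : cs • x ∈ ball (0 : EuclideanSpace ℝ (Fin N)) (r * cs) ↔ x ∈ ball (0 : EuclideanSpace ℝ (Fin N)) r := by
      simp only [mem_ball, dist_zero_right, norm_smul, Real.norm_eq_abs, abs_of_pos hcs]
      rw [mul_comm r cs]
      exact mul_lt_mul_iff_right₀ hcs
    by_cases hx : x ∈ ball (0 : EuclideanSpace ℝ (Fin N)) r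
    · rw [hfdef]
      rw [Set.indicator_of_mem (hmem.mpr hx), Set.indicator_of_mem hx,
        norm_smul, Real.norm_eq_abs, abs_of_pos hcs,
        Real.mul_rpow hcs.le (norm_nonneg _),
        ENNReal.ofReal_mul (Real.rpow_nonneg hcs.le _)]
    · rw [hfdef]
      rw [Set.indicator_of_notMem (fun h => hx (hmem.mp h)), Set.indicator_of_notMem hx,
        mul_zero]
  have h3 : ∫⁻ x, f (cs • x)
      = ENNReal.ofReal (cs ^ c) * ∫⁻ z in ball (0 : EuclideanSpace ℝ (Fin N)) r, ENNReal.ofReal (‖z‖ ^ c) := by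
    simp_rw [h2]
    rw [lintegral_const_mul _ (hmeas_g.indicator measurableSet_ball),
      lintegral_indicator measurableSet_ball]
  have h4 : ∫⁻ x, f x = ∫⁻ z in ball (0 : EuclideanSpace ℝ (Fin N)) (r * cs), ENNReal.ofReal (‖z‖ ^ c) :=
    lintegral_indicator measurableSet_ball _
  have h5 : ENNReal.ofReal (cs ^ N) * ENNReal.ofReal ((cs ^ N)⁻¹) = 1 := by
    rw [← ENNReal.ofReal_mul (le_of_lt hcsN), mul_inv_cancel₀ hcsN.ne', ENNReal.ofReal_one]
  have h6 : ∫⁻ x, f x = ENNReal.ofReal (cs ^ N) * ∫⁻ x, f (cs • x) := by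
    rw [h1, ← mul_assoc, h5, one_mul]
  rw [← h4, h6, h3, ← mul_assoc]
  congr 1
  rw [← ENNReal.ofReal_mul (le_of_lt hcsN)]
  congr 1
  rw [← Real.rpow_natCast cs N, ← Real.rpow_add hcs]

private lemma riesz_finite (hN : 0 < N) {α : ℝ} (hα0 : 0 < α) (hαN : α < N)
    {r : ℝ} (hr : 0 < r) :
    ∫⁻ z in ball (0 : EuclideanSpace ℝ (Fin N)) r, ENNReal.ofReal (‖z‖ ^ (α - N)) < ⊤ := by
  haveI : NeZero N := ⟨hN.ne'⟩
  haveI : Nontrivial (EuclideanSpace ℝ (Fin N)) := inferInstance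
  set c : ℝ := α - N with hcdef
  have hc : c < 0 := by rw [hcdef]; linarith
  have hrw : ∫⁻ z in ball (0 : EuclideanSpace ℝ (Fin N)) r, ENNReal.ofReal (‖z‖ ^ c)
      = ∫⁻ z in ball (0 : EuclideanSpace ℝ (Fin N)) r, ENNReal.ofReal (‖(0 : EuclideanSpace ℝ (Fin N)) - z‖ ^ c) := by
    simp_rw [zero_sub, norm_neg]
  rw [hrw, riesz_layercake 0 c measurableSet_ball]
  set t0 : ℝ := r ^ c with ht0def
  have ht0 : 0 < t0 := Real.rpow_pos_of_pos hr c
  have hsplit : Set.Ioi (0 : ℝ) = Set.Ioc 0 t0 ∪ Set.Ioi t0 :=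
    (Set.Ioc_union_Ioi_eq_Ioi ht0.le).symm
  rw [hsplit, lintegral_union measurableSet_Ioi (Set.Ioc_disjoint_Ioi le_rfl)]
  have hballr : volume (ball (0 : EuclideanSpace ℝ (Fin N)) r) < ⊤ := measure_ball_lt_top
  refine ENNReal.add_lt_top.mpr ⟨?_, ?_⟩
  · calc ∫⁻ t in Set.Ioc (0 : ℝ) t0, volume ({y | t < ‖(0 : EuclideanSpace ℝ (Fin N)) - y‖ ^ c} ∩ ball 0 r)
        ≤ ∫⁻ _ in Set.Ioc (0 : ℝ) t0, volume (ball (0 : EuclideanSpace ℝ (Fin N)) r) :=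
          lintegral_mono fun t => measure_mono Set.inter_subset_right
      _ = volume (ball (0 : EuclideanSpace ℝ (Fin N)) r) * volume (Set.Ioc (0 : ℝ) t0) :=
          setLIntegral_const _ _
      _ < ⊤ := ENNReal.mul_lt_top hballr (by rw [Real.volume_Ioc]; exact ENNReal.ofReal_lt_top)
  · set V1 := volume (ball (0 : EuclideanSpace ℝ (Fin N)) 1) with hV1def
    have hV1 : V1 < ⊤ := measure_ball_lt_top
    have hNc : (N : ℝ) / c < -1 := by
      rw [div_lt_iff_of_neg hc]
      rw [hcdef]
      ring_nf
      linarith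
    have hbound : ∀ t : ℝ, t ∈ Set.Ioi t0 →
        volume ({y | t < ‖(0 : EuclideanSpace ℝ (Fin N)) - y‖ ^ c} ∩ ball 0 r)
          ≤ ENNReal.ofReal (t ^ ((N : ℝ) / c)) * V1 := by
      intro t ht
      have htpos : 0 < t := ht0.trans ht
      calc volume ({y | t < ‖(0 : EuclideanSpace ℝ (Fin N)) - y‖ ^ c} ∩ ball 0 r)
          ≤ volume {y : EuclideanSpace ℝ (Fin N) | t < ‖(0 : EuclideanSpace ℝ (Fin N)) - y‖ ^ c} :=
            measure_mono Set.inter_subset_left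
        _ = volume (ball (0 : EuclideanSpace ℝ (Fin N)) (t ^ (1 / c)) \ {0}) := by
            rw [riesz_levelSet hc htpos 0]
        _ ≤ volume (ball (0 : EuclideanSpace ℝ (Fin N)) (t ^ (1 / c))) := measure_mono Set.diff_subset
        _ = ENNReal.ofReal ((t ^ (1 / c)) ^ N) * V1 := by
            rw [Measure.addHaar_ball volume 0 (Real.rpow_pos_of_pos htpos _).le,
              finrank_euclideanSpace_fin]
        _ = ENNReal.ofReal (t ^ ((N : ℝ) / c)) * V1 := by
            rw [← Real.rpow_natCast (t ^ (1 / c)) N, ← Real.rpow_mul htpos.le,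
              one_div_mul_eq_div]
    calc ∫⁻ t in Set.Ioi t0, volume ({y | t < ‖(0 : EuclideanSpace ℝ (Fin N)) - y‖ ^ c} ∩ ball 0 r)
        ≤ ∫⁻ t in Set.Ioi t0, ENNReal.ofReal (t ^ ((N : ℝ) / c)) * V1 := by
          refine lintegral_mono_ae ((ae_restrict_iff' measurableSet_Ioi).mpr
            (Filter.Eventually.of_forall hbound))
      _ = (∫⁻ t in Set.Ioi t0, ENNReal.ofReal (t ^ ((N : ℝ) / c))) * V1 :=
          lintegral_mul_const _ ((measurable_id.pow measurable_const).ennreal_ofReal)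
      _ < ⊤ := by
          refine ENNReal.mul_lt_top ?_ hV1
          have hint : IntegrableOn (fun t : ℝ => t ^ ((N : ℝ) / c)) (Set.Ioi t0) volume :=
            integrableOn_Ioi_rpow_of_lt hNc ht0
          have := hint.hasFiniteIntegral
          rw [hasFiniteIntegral_iff_norm] at this
          refine lt_of_le_of_lt ?_ this
          exact lintegral_mono fun t => ENNReal.ofReal_le_ofReal (Real.le_norm_self _)

end RieszHelpers

/-- For `N ≥ 2`, `α ∈ (0,N)` and a measurable set `Ω ⊆ ℝ^N` of finite
measure, the Riesz energy is finite and satisfies `V_α(Ω) ≤ C₀ · |Ω|^{1+α/N}`, where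
`C₀ = ∫_B |z|^{α−N} dz` and `B` is the ball centered at the origin of Lebesgue measure 1.
(Stated with the lower Lebesgue integral, so that the inequality also encodes finiteness.) -/
theorem riesz_energy_finite_and_le (N : ℕ) (hN : 2 ≤ N) (α : ℝ)
    (hα : α ∈ Set.Ioo (0 : ℝ) N)
    (Ω : Set (EuclideanSpace ℝ (Fin N)))
    (hΩmeas : MeasurableSet Ω) (hΩfin : volume Ω < ⊤)
    (r : ℝ) (hr : 0 < r)
    (hball : volume (ball (0 : EuclideanSpace ℝ (Fin N)) r) = 1) :
    (∫⁻ x in Ω, ∫⁻ y in Ω, ENNReal.ofReal (‖x - y‖ ^ (α - N))) ≤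
      ENNReal.ofReal
        ((∫ z in ball (0 : EuclideanSpace ℝ (Fin N)) r, ‖z‖ ^ (α - N)) *
          (volume Ω).toReal ^ (1 + α / N)) := by
  have hN0 : 0 < N := by omega
  haveI : NeZero N := ⟨hN0.ne'⟩
  haveI : Nontrivial (EuclideanSpace ℝ (Fin N)) := inferInstance
  set c : ℝ := α - N with hcdef
  have hc : c < 0 := by rw [hcdef]; linarith [hα.2]
  set K : ENNReal := ∫⁻ z in ball (0 : EuclideanSpace ℝ (Fin N)) r, ENNReal.ofReal (‖z‖ ^ c) with hKdef
  have hKfin : K < ⊤ := riesz_finite hN0 hα.1 hα.2 hr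
  -- real integral equals toReal of K
  have hreal : (∫ z in ball (0 : EuclideanSpace ℝ (Fin N)) r, ‖z‖ ^ c) = K.toReal := by
    rw [hKdef, integral_eq_lintegral_of_nonneg_ae
      (Filter.Eventually.of_forall fun z => Real.rpow_nonneg (norm_nonneg _) _)
      (measurable_id.norm.pow measurable_const).aestronglyMeasurable]
  by_cases h0 : volume Ω = 0
  · have : volume.restrict Ω = 0 := Measure.restrict_eq_zero.mpr h0
    rw [this, lintegral_zero_measure]
    exact zero_le
  -- main case
  set T : ℝ := (volume Ω).toReal with hTdef
  have hT : 0 < T := ENNReal.toReal_pos h0 hΩfin.ne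
  set cs : ℝ := T ^ (1 / (N : ℝ)) with hcsdef
  have hcs : 0 < cs := Real.rpow_pos_of_pos hT _
  set ρ : ℝ := r * cs with hρdef
  have hcsN : cs ^ N = T := by
    rw [hcsdef, ← Real.rpow_natCast (T ^ (1 / (N : ℝ))) N, ← Real.rpow_mul hT.le,
      one_div_mul_cancel (by exact_mod_cast hN0.ne' : (N : ℝ) ≠ 0), Real.rpow_one]
  have hvol : volume (ball (0 : EuclideanSpace ℝ (Fin N)) ρ) = volume Ω := by
    rw [hρdef, mul_comm r cs, Measure.addHaar_ball_mul_of_pos volume 0 hcs r,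
      finrank_euclideanSpace_fin, hball, mul_one, hcsN, hTdef,
      ENNReal.ofReal_toReal hΩfin.ne]
  have hΩρ : volume Ω ≤ volume (ball (0 : EuclideanSpace ℝ (Fin N)) ρ) := hvol.ge
  -- inner bound
  have hinner : ∀ x : EuclideanSpace ℝ (Fin N), ∫⁻ y in Ω, ENNReal.ofReal (‖x - y‖ ^ c)
      ≤ ∫⁻ z in ball (0 : EuclideanSpace ℝ (Fin N)) ρ, ENNReal.ofReal (‖z‖ ^ c) :=
    fun x => riesz_inner_bound hN0 hc hΩmeas hΩρ x
  have hscale : ∫⁻ z in ball (0 : EuclideanSpace ℝ (Fin N)) ρ, ENNReal.ofReal (‖z‖ ^ c)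
      = ENNReal.ofReal (cs ^ ((N : ℝ) + c)) * K :=
    riesz_scale hN0 hcs
  have hcsα : cs ^ ((N : ℝ) + c) = T ^ (α / N) := by
    have : (N : ℝ) + c = α := by rw [hcdef]; ring
    rw [this, hcsdef, ← Real.rpow_mul hT.le, one_div_mul_eq_div]
  calc (∫⁻ x in Ω, ∫⁻ y in Ω, ENNReal.ofReal (‖x - y‖ ^ c))
      ≤ ∫⁻ _ in Ω, (ENNReal.ofReal (cs ^ ((N : ℝ) + c)) * K) := by
        refine lintegral_mono fun x => ?_
        rw [← hscale]
        exact hinner x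
    _ = ENNReal.ofReal (T ^ (α / N)) * K * volume Ω := by
        rw [setLIntegral_const, hcsα]
    _ = ENNReal.ofReal (K.toReal * T ^ (1 + α / N)) := by
        rw [ENNReal.ofReal_mul ENNReal.toReal_nonneg,
          ENNReal.ofReal_toReal hKfin.ne]
        have hT1 : T ^ (1 + α / N) = T * T ^ (α / N) := by
          rw [Real.rpow_add hT, Real.rpow_one]
        rw [hT1, ENNReal.ofReal_mul hT.le,
          show volume Ω = ENNReal.ofReal T from (ENNReal.ofReal_toReal hΩfin.ne).symm]
        ring
    _ = ENNReal.ofReal ((∫ z in ball (0 : EuclideanSpace ℝ (Fin N)) r, ‖z‖ ^ c) * T ^ (1 + α / N)) := by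
        rw [hreal]
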